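/- arXiv:0912.0424 — 4 statements merged into one kernel-verified Lean document; each statement's English description precedes it below -/
import Mathlib

section
/- For every integer d ≥ 1, every integer t ≥ 4·(2d)^d, and every sequence v_1, v_2, …, v_t of vectors in the box [-1,1]^d whose total sum v_1 + v_2 + ⋯ + v_t lies in [-1,1]^d, there exists a subset S ⊆ {1,…,t} with 2 ≤ |S| < t such that ∑_{i∈S} v_i ∈ [-1,1]^d. (Equivalently, τ(d) < 4·(2d)^d.) -/
open Finset

lemma reduce_aux (n m : ℕ) (w : Fin n → Fin m → ℝ) :
    ∀ (N : ℕ) (μ : Fin n → ℝ),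
      (Finset.univ.filter (fun i => μ i ≠ 0 ∧ μ i ≠ 1)).card ≤ N →
      (∀ i, 0 ≤ μ i) → (∀ i, μ i ≤ 1) →
      ∃ ν : Fin n → ℝ, (∀ i, 0 ≤ ν i) ∧ (∀ i, ν i ≤ 1) ∧
        (∑ i, ν i • w i) = (∑ i, μ i • w i) ∧
        (∀ i, μ i = 0 → ν i = 0) ∧ (∀ i, μ i = 1 → ν i = 1) ∧
        (Finset.univ.filter (fun i => ν i ≠ 0 ∧ ν i ≠ 1)).card ≤ m := by
  intro N
  induction N with
  | zero =>
    intro μ hc h0 h1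
    exact ⟨μ, h0, h1, rfl, fun _ h => h, fun _ h => h, le_trans hc (Nat.zero_le m)⟩
  | succ N ih =>
    intro μ hc h0 h1
    set F := Finset.univ.filter (fun i => μ i ≠ 0 ∧ μ i ≠ 1) with hF
    by_cases hle : F.card ≤ m
    · exact ⟨μ, h0, h1, rfl, fun _ h => h, fun _ h => h, hle⟩
    -- F.card > m, get a linear dependence among (w i), i ∈ F
    have hnotli : ¬ LinearIndependent ℝ (fun i : F => w i) := by
      intro hli
      have := hli.fintype_card_le_finrank
      rw [Fintype.card_coe, Module.finrank_fin_fun] at this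
      omega
    obtain ⟨g, hgsum, i₁, hgi₁⟩ := Fintype.not_linearIndependent_iff.mp hnotli
    set c : Fin n → ℝ := fun i => if h : i ∈ F then g ⟨i, h⟩ else 0 with hcdef
    have hcF : ∀ i, i ∉ F → c i = 0 := fun i hi => dif_neg hi
    have hcsum : ∑ i, c i • w i = 0 := by
      rw [← Finset.sum_subset (Finset.subset_univ F)
        (fun i _ hi => by rw [hcF i hi, zero_smul])]
      rw [← Finset.sum_attach F (fun i => c i • w i)]
      rw [← hgsum]
      exact Finset.sum_congr rfl fun i _ => by rw [hcdef]; simp [dif_pos i.2]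
    -- the set of moving coordinates
    set D : Finset (Fin n) := F.filter (fun i => c i ≠ 0) with hD
    have hDne : D.Nonempty := by
      refine ⟨(i₁ : Fin n), Finset.mem_filter.mpr ⟨i₁.2, ?_⟩⟩
      rw [hcdef]; simpa [dif_pos i₁.2] using hgi₁
    set bnd : Fin n → ℝ := fun i => if 0 < c i then (1 - μ i) / c i else μ i / (-c i) with hbnd
    set s : ℝ := D.inf' hDne bnd with hs
    have hfrac : ∀ i ∈ D, μ i ≠ 0 ∧ μ i ≠ 1 := by
      intro i hi
      have := (Finset.mem_filter.mp (Finset.mem_filter.mp hi).1).2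
      exact this
    have hbndi_pos : ∀ i, 0 < c i → bnd i = (1 - μ i) / c i := fun i h => if_pos h
    have hbndi_neg : ∀ i, ¬ 0 < c i → bnd i = μ i / (-c i) := fun i h => if_neg h
    have hbnd_pos : ∀ i ∈ D, 0 ≤ bnd i := by
      intro i hi
      have hc0 : c i ≠ 0 := (Finset.mem_filter.mp hi).2
      by_cases h : 0 < c i
      · rw [hbndi_pos i h]; exact div_nonneg (by linarith [h1 i]) h.le
      · rw [hbndi_neg i h]
        have : c i < 0 := lt_of_le_of_ne (not_lt.mp h) hc0
        exact div_nonneg (h0 i) (by linarith)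
    have hs0 : 0 ≤ s := Finset.le_inf' hDne bnd hbnd_pos
    set ν₀ : Fin n → ℝ := fun i => μ i + s * c i with hν₀
    have hν₀i : ∀ i, ν₀ i = μ i + s * c i := fun i => rfl
    have hν₀eq : ∀ i, c i = 0 → ν₀ i = μ i := by
      intro i hci; rw [hν₀i, hci]; ring
    have hν₀mem : ∀ i, 0 ≤ ν₀ i ∧ ν₀ i ≤ 1 := by
      intro i
      rw [hν₀i]
      by_cases hiD : i ∈ D
      · have hsb : s ≤ bnd i := Finset.inf'_le bnd hiD
        have hc0 : c i ≠ 0 := (Finset.mem_filter.mp hiD).2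
        by_cases h : 0 < c i
        · rw [hbndi_pos i h] at hsb
          have hkey : s * c i ≤ (1 - μ i) / c i * c i := by nlinarith
          rw [div_mul_cancel₀ _ (ne_of_gt h)] at hkey
          constructor
          · nlinarith [h0 i]
          · linarith
        · have hcneg : c i < 0 := lt_of_le_of_ne (not_lt.mp h) hc0
          rw [hbndi_neg i h] at hsb
          have hkey : s * c i ≥ μ i / (-c i) * c i := by nlinarith
          have heq : μ i / (-c i) * c i = -μ i := by
            field_simp
          rw [heq] at hkey
          constructor
          · linarith
          · nlinarith [h1 i]
      · have : c i = 0 := by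
          by_contra hc0
          have hiF : i ∈ F := by
            by_contra hiF; exact hc0 (hcF i hiF)
          exact hiD (Finset.mem_filter.mpr ⟨hiF, hc0⟩)
        rw [this]
        constructor
        · linarith [h0 i]
        · linarith [h1 i]
    -- some coordinate of D becomes 0 or 1
    obtain ⟨i₀, hi₀D, hi₀⟩ := Finset.exists_mem_eq_inf' hDne bnd
    have hi₀c : c i₀ ≠ 0 := (Finset.mem_filter.mp hi₀D).2
    have hi₀int : ν₀ i₀ = 0 ∨ ν₀ i₀ = 1 := by
      rw [hν₀i, hs, hi₀]
      by_cases h : 0 < c i₀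
      · right; rw [hbndi_pos i₀ h]; field_simp; ring
      · left; rw [hbndi_neg i₀ h]
        have : c i₀ < 0 := lt_of_le_of_ne (not_lt.mp h) hi₀c
        field_simp
        ring
    -- new fractional set is smaller
    have hsubset : (Finset.univ.filter (fun i => ν₀ i ≠ 0 ∧ ν₀ i ≠ 1)) ⊆ F.erase i₀ := by
      intro i hi
      have hi' := (Finset.mem_filter.mp hi).2
      refine Finset.mem_erase.mpr ⟨?_, ?_⟩
      · rintro rfl; rcases hi₀int with h | h
        · exact hi'.1 h
        · exact hi'.2 h
      · by_contra hiF
        have := hν₀eq i (hcF i hiF)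
        rw [this] at hi'
        have : i ∈ F := Finset.mem_filter.mpr ⟨Finset.mem_univ i, hi'⟩
        exact hiF this
    have hcard' : (Finset.univ.filter (fun i => ν₀ i ≠ 0 ∧ ν₀ i ≠ 1)).card ≤ N := by
      have h1' : (F.erase i₀).card = F.card - 1 := Finset.card_erase_of_mem (Finset.mem_filter.mp hi₀D).1
      have := Finset.card_le_card hsubset
      omega
    obtain ⟨ν, hν0, hν1, hνsum, hνz, hνo, hνc⟩ := ih ν₀ hcard' (fun i => (hν₀mem i).1) (fun i => (hν₀mem i).2)
    refine ⟨ν, hν0, hν1, ?_, ?_, ?_, hνc⟩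
    · rw [hνsum]
      have : ∑ i, ν₀ i • w i = ∑ i, μ i • w i + s • ∑ i, c i • w i := by
        rw [Finset.smul_sum, ← Finset.sum_add_distrib]
        exact Finset.sum_congr rfl fun i _ => by rw [hν₀i, add_smul, smul_smul]
      rw [this, hcsum, smul_zero, add_zero]
    · intro i hi
      have hiF : i ∉ F := by
        rw [hF]; simp only [Finset.mem_filter, Finset.mem_univ, true_and]
        intro h; exact h.1 hi
      exact hνz i (by rw [hν₀eq i (hcF i hiF)]; exact hi)
    · intro i hi
      have hiF : i ∉ F := by
        rw [hF]; simp only [Finset.mem_filter, Finset.mem_univ, true_and]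
        intro h; exact h.2 hi
      exact hνo i (by rw [hν₀eq i (hcF i hiF)]; exact hi)

lemma step (d t : ℕ) (v : Fin t → Fin d → ℝ) (k : ℕ) (hk : d + 1 ≤ k)
    (B : Finset (Fin t)) (hBcard : B.card = k)
    (lam : Fin t → ℝ) (h0 : ∀ i, 0 ≤ lam i) (h1 : ∀ i, lam i ≤ 1)
    (hsupp : ∀ i ∉ B, lam i = 0)
    (hsum1 : ∑ i, lam i = (k : ℝ) - d)
    (hsumv : ∀ j, ∑ i, lam i * v i j = (((k : ℝ) - d) / t) * ∑ i, v i j) :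
    ∃ (B' : Finset (Fin t)) (lam' : Fin t → ℝ), B' ⊆ B ∧ B'.card = k - 1 ∧
      (∀ i, 0 ≤ lam' i) ∧ (∀ i, lam' i ≤ 1) ∧ (∀ i ∉ B', lam' i = 0) ∧
      (∑ i, lam' i = (k : ℝ) - 1 - d) ∧
      (∀ j, ∑ i, lam' i * v i j = (((k : ℝ) - 1 - d) / t) * ∑ i, v i j) := by
  have hkd : (1 : ℝ) ≤ (k : ℝ) - d := by
    have : (d : ℝ) + 1 ≤ k := by exact_mod_cast hk
    linarith
  have hkd0 : (k : ℝ) - d ≠ 0 := by linarith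
  set r : ℝ := ((k : ℝ) - 1 - d) / ((k : ℝ) - d) with hr
  have hr0 : 0 ≤ r := div_nonneg (by linarith) (by linarith)
  have hr1 : r ≤ 1 := by
    rw [hr, div_le_one (by linarith)]; linarith
  set μ : Fin t → ℝ := fun i => r * lam i with hμ
  have hμi : ∀ i, μ i = r * lam i := fun _ => rfl
  set w : Fin t → Fin (d + 1) → ℝ := fun i => Fin.cons 1 (v i) with hw
  have hwi0 : ∀ i, w i 0 = 1 := fun i => rfl
  have hwis : ∀ i (j : Fin d), w i j.succ = v i j := fun i j => rfl
  obtain ⟨ν, hν0, hν1, hνsum, hνz, _, hνfrac⟩ :=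
    reduce_aux t (d + 1) w (Finset.univ.filter (fun i => μ i ≠ 0 ∧ μ i ≠ 1)).card μ
      le_rfl (fun i => mul_nonneg hr0 (h0 i))
      (fun i => le_trans (mul_le_mul hr1 (h1 i) (h0 i) zero_le_one) (by norm_num))
  -- extract coordinates of the sum identity
  have hsum_at : ∀ (jj : Fin (d + 1)), ∑ i, ν i * w i jj = ∑ i, μ i * w i jj := by
    intro jj
    have := congrFun hνsum jj
    rw [Finset.sum_apply, Finset.sum_apply] at this
    simpa [Pi.smul_apply, smul_eq_mul] using this
  have hνtot : ∑ i, ν i = (k : ℝ) - 1 - d := by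
    have h := hsum_at 0
    simp only [hwi0, mul_one] at h
    rw [h]
    have : ∑ i, μ i = r * ∑ i, lam i := by
      rw [Finset.mul_sum]
    rw [this, hsum1]
    exact div_mul_cancel₀ _ hkd0
  have hνv : ∀ j, ∑ i, ν i * v i j = (((k : ℝ) - 1 - d) / t) * ∑ i, v i j := by
    intro j
    have h := hsum_at j.succ
    simp only [hwis] at h
    rw [h]
    have : ∑ i, μ i * v i j = r * ∑ i, lam i * v i j := by
      rw [Finset.mul_sum]
      exact Finset.sum_congr rfl fun i _ => by rw [hμi, mul_assoc]
    rw [this, hsumv j, ← mul_assoc, hr, div_mul_div_comm,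
      mul_comm ((k:ℝ) - 1 - d) ((k:ℝ) - d), mul_div_mul_left _ _ hkd0]
  have hν_supp : ∀ i ∉ B, ν i = 0 := by
    intro i hi
    exact hνz i (by rw [hμi, hsupp i hi, mul_zero])
  -- find an element of B where ν vanishes
  have hzero : ∃ i₀ ∈ B, ν i₀ = 0 := by
    by_contra hno
    push_neg at hno
    have hpos : ∀ i ∈ B, 0 < ν i := fun i hi => lt_of_le_of_ne (hν0 i) (Ne.symm (hno i hi))
    set O : Finset (Fin t) := B.filter (fun i => ν i = 1) with hO
    set Fr : Finset (Fin t) := B.filter (fun i => ¬ ν i = 1) with hFr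
    have hcards : O.card + Fr.card = k := by
      rw [hO, hFr, Finset.card_filter_add_card_filter_not]; exact hBcard
    have hFrsub : Fr ⊆ Finset.univ.filter (fun i => ν i ≠ 0 ∧ ν i ≠ 1) := by
      intro i hi
      obtain ⟨hiB, hi1⟩ := Finset.mem_filter.mp hi
      exact Finset.mem_filter.mpr ⟨Finset.mem_univ i, hno i hiB, hi1⟩
    have hFrcard : Fr.card ≤ d + 1 := le_trans (Finset.card_le_card hFrsub) hνfrac
    have hsumB : ∑ i, ν i = ∑ i ∈ B, ν i :=
      (Finset.sum_subset (Finset.subset_univ B) (fun i _ hi => hν_supp i hi)).symm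
    have hsplit : ∑ i ∈ B, ν i = ∑ i ∈ O, ν i + ∑ i ∈ Fr, ν i := by
      rw [hO, hFr]; exact (Finset.sum_filter_add_sum_filter_not B _ _).symm
    have hOsum : ∑ i ∈ O, ν i = (O.card : ℝ) := by
      rw [Finset.sum_congr rfl (fun i hi => (Finset.mem_filter.mp hi).2)]
      simp [hO]
    rcases Finset.eq_empty_or_nonempty Fr with hFe | hFne
    · rw [hFe] at hcards
      simp at hcards
      rw [hνtot, hsplit, hOsum, hFe] at hsumB
      simp at hsumB
      rw [hcards] at hsumB
      have : (d : ℝ) + 1 = 0 := by linarith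
      have : (0:ℝ) < d + 1 := by positivity
      linarith
    · have hFpos : 0 < ∑ i ∈ Fr, ν i :=
        Finset.sum_pos (fun i hi => hpos i (Finset.mem_filter.mp hi).1) hFne
      have hOcard : (k : ℝ) - (d + 1) ≤ (O.card : ℝ) := by
        have : k - (d + 1) ≤ O.card := by omega
        have hkk : ((k - (d+1) : ℕ) : ℝ) = (k : ℝ) - (d + 1) := by
          push_cast [Nat.cast_sub hk]; ring
        calc (k : ℝ) - (d + 1) = ((k - (d+1) : ℕ) : ℝ) := hkk.symm
          _ ≤ (O.card : ℝ) := by exact_mod_cast this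
      rw [hνtot, hsplit, hOsum] at hsumB
      push_cast at hsumB hOcard
      linarith
  obtain ⟨i₀, hi₀B, hi₀⟩ := hzero
  refine ⟨B.erase i₀, ν, Finset.erase_subset _ _, ?_, hν0, hν1, ?_, hνtot, hνv⟩
  · rw [Finset.card_erase_of_mem hi₀B, hBcard]
  · intro i hi
    by_cases hiB : i ∈ B
    · have : i = i₀ := by
        by_contra hne
        exact hi (Finset.mem_erase.mpr ⟨hne, hiB⟩)
      rw [this]; exact hi₀
    · exact hν_supp i hiB

lemma bound_of_lam (d t : ℕ) (v : Fin t → Fin d → ℝ) (hbox : ∀ i j, |v i j| ≤ 1)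
    (K : ℕ) (B : Finset (Fin t)) (hBcard : B.card = K)
    (lam : Fin t → ℝ) (h0 : ∀ i, 0 ≤ lam i) (h1 : ∀ i, lam i ≤ 1)
    (hsupp : ∀ i ∉ B, lam i = 0)
    (hsum1 : ∑ i, lam i = (K : ℝ) - d)
    (hsumv : ∀ j, ∑ i, lam i * v i j = (((K : ℝ) - d) / t) * ∑ i, v i j) :
    ∀ j, |∑ i ∈ B, v i j - (((K : ℝ) - d) / t) * ∑ i, v i j| ≤ d := by
  intro j
  have hsB : ∑ i, lam i * v i j = ∑ i ∈ B, lam i * v i j :=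
    (Finset.sum_subset (Finset.subset_univ B)
      (fun i _ hi => by rw [hsupp i hi, zero_mul])).symm
  have hlB : ∑ i, lam i = ∑ i ∈ B, lam i :=
    (Finset.sum_subset (Finset.subset_univ B) (fun i _ hi => hsupp i hi)).symm
  have key : ∑ i ∈ B, v i j - (((K : ℝ) - d) / t) * ∑ i, v i j
      = ∑ i ∈ B, (1 - lam i) * v i j := by
    rw [← hsumv j, hsB, ← Finset.sum_sub_distrib]
    exact Finset.sum_congr rfl fun i _ => by ring
  rw [key]
  calc |∑ i ∈ B, (1 - lam i) * v i j| ≤ ∑ i ∈ B, |(1 - lam i) * v i j| :=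
        Finset.abs_sum_le_sum_abs _ _
    _ ≤ ∑ i ∈ B, (1 - lam i) := by
        refine Finset.sum_le_sum fun i _ => ?_
        rw [abs_mul, abs_of_nonneg (by linarith [h1 i])]
        calc (1 - lam i) * |v i j| ≤ (1 - lam i) * 1 :=
              mul_le_mul_of_nonneg_left (hbox i j) (by linarith [h1 i])
          _ = 1 - lam i := mul_one _
    _ = (B.card : ℝ) - ∑ i ∈ B, lam i := by
        rw [Finset.sum_sub_distrib, Finset.sum_const, nsmul_eq_mul, mul_one]
    _ = (d : ℝ) := by rw [hBcard, ← hlB, hsum1]; ring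

lemma chain (d t : ℕ) (v : Fin t → Fin d → ℝ) (hbox : ∀ i j, |v i j| ≤ 1)
    (hd : 1 ≤ d) (hdt : d ≤ t) :
    ∀ jj : ℕ, jj ≤ t - d →
    ∃ A : ℕ → Finset (Fin t),
      (∀ k, t - jj ≤ k → k < t → A k ⊆ A (k + 1)) ∧
      (∀ k, t - jj ≤ k → k ≤ t → (A k).card = k) ∧
      (∀ k, t - jj ≤ k → k ≤ t → ∀ j,
        |∑ i ∈ A k, v i j - (((k : ℝ) - d) / t) * ∑ i, v i j| ≤ d) ∧
      ∃ lam : Fin t → ℝ, (∀ i, 0 ≤ lam i) ∧ (∀ i, lam i ≤ 1) ∧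
        (∀ i ∉ A (t - jj), lam i = 0) ∧
        (∑ i, lam i = ((t - jj : ℕ) : ℝ) - d) ∧
        (∀ j, ∑ i, lam i * v i j = ((((t - jj : ℕ) : ℝ) - d) / t) * ∑ i, v i j) := by
  have ht0 : 0 < t := lt_of_lt_of_le hd hdt
  have ht0' : (0 : ℝ) < t := by exact_mod_cast ht0
  intro jj
  induction jj with
  | zero =>
    intro _
    refine ⟨fun _ => Finset.univ, fun _ _ h => absurd h (by omega), ?_, ?_, ?_⟩
    · intro k hk1 hk2
      have : k = t := by omega
      rw [this, Finset.card_univ, Fintype.card_fin]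
    · intro k hk1 hk2 j
      have hkt : k = t := by omega
      rw [hkt]
      have hcard : (Finset.univ : Finset (Fin t)).card = t := by
        rw [Finset.card_univ, Fintype.card_fin]
      exact bound_of_lam d t v hbox t Finset.univ hcard
        (fun _ => ((t : ℝ) - d) / t)
        (fun i => div_nonneg (sub_nonneg.mpr (by exact_mod_cast hdt)) ht0'.le)
        (fun i => by rw [div_le_one ht0']; have : (0:ℝ) ≤ d := Nat.cast_nonneg d; linarith)
        (fun i hi => absurd (Finset.mem_univ i) hi)
        (by rw [Finset.sum_const, Finset.card_univ, Fintype.card_fin, nsmul_eq_mul,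
             mul_div_assoc']; rw [mul_comm]; rw [mul_div_assoc, div_self (ne_of_gt ht0'), mul_one])
        (fun j => (Finset.mul_sum Finset.univ (fun i => v i j) (((t:ℝ) - d)/t)).symm) j
    · refine ⟨fun _ => ((t : ℝ) - d) / t, ?_, ?_, ?_, ?_, ?_⟩
      · intro i
        exact div_nonneg (sub_nonneg.mpr (by exact_mod_cast hdt)) ht0'.le
      · intro i
        rw [div_le_one ht0']; have : (0:ℝ) ≤ d := Nat.cast_nonneg d; linarith
      · intro i hi; exact absurd (Finset.mem_univ i) hi
      · rw [Finset.sum_const, Finset.card_univ, Fintype.card_fin, nsmul_eq_mul]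
        rw [Nat.sub_zero, mul_div_assoc']
        rw [mul_comm, mul_div_assoc, div_self (ne_of_gt ht0'), mul_one]
      · intro j
        rw [Nat.sub_zero]
        exact (Finset.mul_sum Finset.univ (fun i => v i j) (((t:ℝ) - d)/t)).symm
  | succ jj ih =>
    intro hjj
    obtain ⟨A, hAsub, hAcard, hAbd, lam, hl0, hl1, hlsupp, hlsum, hlsumv⟩ := ih (by omega)
    set m : ℕ := t - jj with hm
    have hm1 : d + 1 ≤ m := by omega
    have hm' : t - (jj + 1) = m - 1 := by omega
    obtain ⟨B', lam', hB'sub, hB'card, hl'0, hl'1, hl'supp, hl'sum, hl'sumv⟩ :=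
      step d t v m hm1 (A m) (hAcard m le_rfl (by omega)) lam hl0 hl1 hlsupp hlsum hlsumv
    have hcast : ((m - 1 : ℕ) : ℝ) = (m : ℝ) - 1 := by
      have : 1 ≤ m := by omega
      push_cast [Nat.cast_sub this]; ring
    set A' : ℕ → Finset (Fin t) := fun k => if k < m then B' else A k with hA'
    have hA'lt : ∀ k, k < m → A' k = B' := fun k h => if_pos h
    have hA'ge : ∀ k, ¬ k < m → A' k = A k := fun k h => if_neg h
    refine ⟨A', ?_, ?_, ?_, lam', hl'0, hl'1, ?_, ?_, ?_⟩
    · intro k hk1 hk2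
      rcases lt_or_ge k m with h | h
      · have hk : k = m - 1 := by omega
        have h1 : k + 1 = m := by omega
        rw [hA'lt k h, h1, hA'ge m (lt_irrefl m)]
        exact hB'sub
      · rw [hA'ge k (by omega), hA'ge (k+1) (by omega)]
        exact hAsub k (by omega) hk2
    · intro k hk1 hk2
      rcases lt_or_ge k m with h | h
      · have hk : k = m - 1 := by omega
        rw [hA'lt k h, hB'card, hk]
      · rw [hA'ge k (by omega)]
        exact hAcard k (by omega) hk2
    · intro k hk1 hk2 j
      rcases lt_or_ge k m with h | h
      · have hk : k = m - 1 := by omega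
        rw [hA'lt k h, hk]
        have heq : ((m - 1 : ℕ) : ℝ) - d = (m : ℝ) - 1 - d := by rw [hcast]
        refine bound_of_lam d t v hbox (m - 1) B' hB'card lam' hl'0 hl'1 hl'supp ?_ ?_ j
        · rw [heq]; exact hl'sum
        · intro j'; rw [heq]; exact hl'sumv j'
      · rw [hA'ge k (by omega)]
        exact hAbd k (by omega) hk2 j
    · intro i hi
      rw [hm'] at hi
      have : i ∉ B' := by
        rw [hA'lt (m-1) (by omega)] at hi
        exact hi
      exact hl'supp i this
    · rw [hm', hcast]
      exact hl'sum
    · intro j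
      rw [hm', hcast]
      exact hl'sumv j
  
lemma arith (d : ℕ) (hd : 1 ≤ d) : 2 * (2 * d + 1) ^ d + d ≤ 4 * (2 * d) ^ d := by
  have hd' : (0 : ℝ) < d := by exact_mod_cast hd
  have hx : (0 : ℝ) < 2 * d := by linarith
  have hexp : (1 : ℝ) + 1 / (2 * d) ≤ Real.exp (1 / (2 * d)) := by
    have := Real.add_one_le_exp (1 / (2 * (d:ℝ)))
    linarith
  have h1 : (2 * (d : ℝ) + 1) ≤ (2 * d) * Real.exp (1 / (2 * d)) := by
    have h2 : (2 * (d:ℝ)) * (1 + 1 / (2 * d)) ≤ (2 * d) * Real.exp (1 / (2 * d)) :=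
      mul_le_mul_of_nonneg_left hexp hx.le
    have h3 : (2 * (d:ℝ)) * (1 + 1 / (2 * d)) = 2 * d + 1 := by field_simp
    linarith
  have hpow : (2 * (d : ℝ) + 1) ^ d ≤ ((2 * d) * Real.exp (1 / (2 * d))) ^ d :=
    pow_le_pow_left₀ (by linarith) h1 d
  have hsplit : ((2 * (d:ℝ)) * Real.exp (1 / (2 * d))) ^ d
      = (2 * d) ^ d * Real.exp (1 / (2 * d)) ^ d := mul_pow _ _ d
  have hehalf : Real.exp (1 / (2 * (d:ℝ))) ^ d = Real.exp (1 / 2) := by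
    rw [← Real.exp_nat_mul]
    congr 1
    field_simp
  have hexp_half : Real.exp (1 / 2 : ℝ) ≤ 7 / 4 := by
    nlinarith [Real.exp_pos (1/2 : ℝ), Real.exp_one_lt_d9,
      Real.exp_one_rpow 1, sq_nonneg (Real.exp (1/2 : ℝ)),
      (by rw [← Real.exp_add]; norm_num : Real.exp (1/2 : ℝ) * Real.exp (1/2 : ℝ) = Real.exp 1)]
  have hdx : (d : ℝ) ≤ (1 / 2) * (2 * d) ^ d := by
    have h2d : 2 * d ≤ (2 * d) ^ d := Nat.le_self_pow (by omega) (2 * d)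
    have : (2 * (d:ℝ)) ≤ ((2 * d) ^ d : ℕ) := by exact_mod_cast h2d
    push_cast at this ⊢
    linarith
  have hfinal : 2 * (2 * (d:ℝ) + 1) ^ d + d ≤ 4 * (2 * d) ^ d := by
    have hpp : (2 * (d:ℝ) + 1) ^ d ≤ (2 * d) ^ d * (7 / 4) := by
      calc (2 * (d:ℝ) + 1) ^ d ≤ (2 * d) ^ d * Real.exp (1 / (2 * d)) ^ d := by
            rw [← hsplit]; exact hpow
        _ ≤ (2 * d) ^ d * (7 / 4) := by
            rw [hehalf]
            exact mul_le_mul_of_nonneg_left hexp_half (by positivity)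
    nlinarith [pow_pos hx d]
  have := hfinal
  push_cast at this
  exact_mod_cast (by push_cast; exact hfinal : ((2 * (2 * d + 1) ^ d + d : ℕ) : ℝ) ≤ ((4 * (2 * d) ^ d : ℕ) : ℝ))

/-- Upper bound: τ(d) < 4·(2d)^d. For every `d ≥ 1`, every `t ≥ 4·(2d)^d`, and every
sequence of `t` vectors in the box `[-1,1]^d` whose total sum lies in the box, there is
a subset `S` of indices with `2 ≤ |S| < t` whose sum lies in the box. -/
theorem stmt_0 (d t : ℕ) (hd : 1 ≤ d) (ht : 4 * (2 * d) ^ d ≤ t)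
    (v : Fin t → Fin d → ℝ)
    (hbox : ∀ i j, |v i j| ≤ 1)
    (hsum : ∀ j, |∑ i, v i j| ≤ 1) :
    ∃ S : Finset (Fin t), 2 ≤ S.card ∧ S.card < t ∧ ∀ j, |∑ i ∈ S, v i j| ≤ 1 := by
  have hpow2d : 2 * d ≤ (2 * d) ^ d := Nat.le_self_pow (by omega) _
  have hdt : d ≤ t := by
    calc d ≤ 2 * d := by omega
      _ ≤ (2 * d) ^ d := hpow2d
      _ ≤ 4 * (2 * d) ^ d := by omega
      _ ≤ t := ht
  have ht0 : 0 < t := lt_of_lt_of_le hd hdt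
  have ht0' : (0 : ℝ) < t := by exact_mod_cast ht0
  obtain ⟨A, hAsub, hAcard, hAbd, -⟩ := chain d t v hbox hd hdt (t - d) le_rfl
  have hbase : t - (t - d) = d := by omega
  rw [hbase] at hAsub hAcard hAbd
  -- monotonicity of the chain
  have mono : ∀ k l, d ≤ k → k ≤ l → l ≤ t → A k ⊆ A l := by
    intro k l hk hkl
    induction l, hkl using Nat.le_induction with
    | base => intro _; exact subset_rfl
    | succ n hn ih =>
      intro hnt
      exact (ih (by omega)).trans (hAsub n (by omega) (by omega))
  -- bounds on shifted prefix sums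
  have hxb : ∀ k, d ≤ k → k ≤ t → ∀ j,
      0 ≤ (∑ i ∈ A k, v i j) - min 0 (∑ i, v i j) + d ∧
      (∑ i ∈ A k, v i j) - min 0 (∑ i, v i j) + d ≤ 2 * d + 1 := by
    intro k hk1 hk2 j
    have hb := abs_le.mp (hAbd k hk1 hk2 j)
    set α : ℝ := ((k : ℝ) - d) / t with hα
    have hα0 : 0 ≤ α := div_nonneg (sub_nonneg.mpr (by exact_mod_cast hk1)) ht0'.le
    have hα1 : α ≤ 1 := by
      rw [hα, div_le_one ht0']
      have h1 : (k : ℝ) ≤ t := by exact_mod_cast hk2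
      have h2 : (0:ℝ) ≤ d := Nat.cast_nonneg d
      linarith
    have hTj := abs_le.mp (hsum j)
    rcases le_or_gt 0 (∑ i, v i j) with h | h
    · rw [min_eq_left h]
      have hm1 : 0 ≤ α * ∑ i, v i j := mul_nonneg hα0 h
      have hm2 : α * ∑ i, v i j ≤ ∑ i, v i j := by nlinarith
      constructor <;> linarith [hb.1, hb.2, hTj.2]
    · rw [min_eq_right h.le]
      have hm1 : (∑ i, v i j) ≤ α * ∑ i, v i j := by nlinarith
      have hm2 : α * ∑ i, v i j ≤ 0 := mul_nonpos_of_nonneg_of_nonpos hα0 h.le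
      constructor <;> linarith [hb.1, hb.2, hTj.1]
  -- the cell map
  set f : ℕ → Fin d → ℤ :=
    fun k j => min ⌊(∑ i ∈ A k, v i j) - min 0 (∑ i, v i j) + d⌋ (2 * (d : ℤ)) with hf
  have hfi : ∀ k j, f k j = min ⌊(∑ i ∈ A k, v i j) - min 0 (∑ i, v i j) + d⌋ (2 * (d : ℤ)) :=
    fun _ _ => rfl
  have hmaps : ∀ k ∈ Finset.Icc d t,
      f k ∈ Finset.Icc (fun _ : Fin d => (0 : ℤ)) (fun _ : Fin d => 2 * (d : ℤ)) := by
    intro k hk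
    obtain ⟨hk1, hk2⟩ := Finset.mem_Icc.mp hk
    rw [Finset.mem_Icc]
    constructor <;> rw [Pi.le_def] <;> intro j
    · rw [hfi]
      refine le_min (Int.le_floor.mpr ?_) (by positivity)
      have := (hxb k hk1 hk2 j).1
      push_cast
      linarith
    · rw [hfi]; exact min_le_right _ _
  have hcells : (Finset.Icc (fun _ : Fin d => (0 : ℤ)) (fun _ : Fin d => 2 * (d : ℤ))).card
      = (2 * d + 1) ^ d := by
    rw [Pi.card_Icc]
    have : ∀ j : Fin d, (Finset.Icc (0 : ℤ) (2 * (d : ℤ))).card = 2 * d + 1 := by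
      intro j
      rw [Int.card_Icc]
      omega
    rw [Finset.prod_congr rfl (fun j _ => this j), Finset.prod_const, Finset.card_univ,
      Fintype.card_fin]
  have harith := arith d hd
  have hlt : (Finset.Icc (fun _ : Fin d => (0 : ℤ)) (fun _ : Fin d => 2 * (d : ℤ))).card * 2
      < (Finset.Icc d t).card := by
    rw [hcells, Nat.card_Icc]
    have h2 : 2 * (2 * d + 1) ^ d + d ≤ t := le_trans harith ht
    set X := (2 * d + 1) ^ d
    omega
  obtain ⟨y, -, hycard⟩ := Finset.exists_lt_card_fiber_of_mul_lt_card_of_maps_to hmaps hlt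
  set fib := {x ∈ Finset.Icc d t | f x = y} with hfib
  have hne : fib.Nonempty := Finset.card_pos.mp (by omega)
  set p0 := fib.min' hne with hp0def
  set p2 := fib.max' hne with hp2def
  have hp0 : p0 ∈ fib := fib.min'_mem hne
  have hp2 : p2 ∈ fib := fib.max'_mem hne
  obtain ⟨hp0Icc, hfp0⟩ := Finset.mem_filter.mp hp0
  obtain ⟨hp2Icc, hfp2⟩ := Finset.mem_filter.mp hp2
  obtain ⟨hdp0, hp0t⟩ := Finset.mem_Icc.mp hp0Icc
  obtain ⟨hdp2, hp2t⟩ := Finset.mem_Icc.mp hp2Icc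
  have hsubIcc : fib ⊆ Finset.Icc p0 p2 := fun x hx =>
    Finset.mem_Icc.mpr ⟨fib.min'_le x hx, fib.le_max' x hx⟩
  have hgap : p0 + 2 ≤ p2 := by
    have h1 := Finset.card_le_card hsubIcc
    rw [Nat.card_Icc] at h1
    omega
  have hp02 : p0 ≤ p2 := by omega
  have hAsubm : A p0 ⊆ A p2 := mono p0 p2 hdp0 hp02 hp2t
  refine ⟨A p2 \ A p0, ?_, ?_, ?_⟩
  · rw [Finset.card_sdiff_of_subset hAsubm, hAcard p0 hdp0 hp0t, hAcard p2 hdp2 hp2t]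
    omega
  · rw [Finset.card_sdiff_of_subset hAsubm, hAcard p0 hdp0 hp0t, hAcard p2 hdp2 hp2t]
    omega
  · intro j
    rw [Finset.sum_sdiff_eq_sub hAsubm]
    have key : ∀ p, d ≤ p → p ≤ t →
        ((f p j : ℝ) ≤ (∑ i ∈ A p, v i j) - min 0 (∑ i, v i j) + d ∧
         (∑ i ∈ A p, v i j) - min 0 (∑ i, v i j) + d ≤ (f p j : ℝ) + 1) := by
      intro p h1 h2
      obtain ⟨hx0, hx1⟩ := hxb p h1 h2 j
      constructor
      · have hle : f p j ≤ ⌊(∑ i ∈ A p, v i j) - min 0 (∑ i, v i j) + d⌋ := by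
          rw [hfi]; exact min_le_left _ _
        calc ((f p j : ℤ) : ℝ) ≤ (⌊(∑ i ∈ A p, v i j) - min 0 (∑ i, v i j) + d⌋ : ℝ) := by
              exact_mod_cast hle
          _ ≤ _ := Int.floor_le _
      · rcases le_or_gt ⌊(∑ i ∈ A p, v i j) - min 0 (∑ i, v i j) + d⌋ (2 * (d : ℤ)) with h | h
        · have heq : f p j = ⌊(∑ i ∈ A p, v i j) - min 0 (∑ i, v i j) + d⌋ := by
            rw [hfi]; exact min_eq_left h
          rw [heq]
          linarith [Int.lt_floor_add_one ((∑ i ∈ A p, v i j) - min 0 (∑ i, v i j) + d)]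
        · have heq : f p j = 2 * (d : ℤ) := by
            rw [hfi]; exact min_eq_right h.le
          rw [heq]
          push_cast
          linarith
    have hyy : f p0 j = f p2 j := by rw [hfp0, hfp2]
    obtain ⟨ha0, ha1⟩ := key p0 hdp0 hp0t
    obtain ⟨hb0, hb1⟩ := key p2 hdp2 hp2t
    rw [hyy] at ha0 ha1
    exact abs_le.mpr ⟨by linarith, by linarith⟩
end

section
/- For every integer t ≥ 2 and every sequence v_1, …, v_t of vectors in [-1,1]^2 with v_1 + ⋯ + v_t ∈ [-1,1]^2, there exist indices i ≠ j in {1,…,t} such that v_i + v_j ∈ [-1,1]^2. (Equivalently, τ(2) = 2.) -/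
/-- τ(2) = 2: in any sequence of `t ≥ 2` vectors in `[-1,1]^2` with sum in `[-1,1]^2`,
some two of the vectors have sum in `[-1,1]^2`. -/
theorem stmt_3 (t : ℕ) (ht : 2 ≤ t) (v : Fin t → Fin 2 → ℝ)
    (hbox : ∀ i j, |v i j| ≤ 1)
    (hsum : ∀ j, |∑ i, v i j| ≤ 1) :
    ∃ i j : Fin t, i ≠ j ∧ ∀ k, |v i k + v j k| ≤ 1 := by
  by_contra hcon
  push_neg at hcon
  -- sign extraction: every bad pair has a coordinate with strictly same-signed entries
  have sign : ∀ i j : Fin t, i ≠ j → ∃ (k : Fin 2) (σ : ℝ), (σ = 1 ∨ σ = -1) ∧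
      0 < σ * v i k ∧ 0 < σ * v j k ∧ 1 < σ * (v i k + v j k) := by
    intro i j hij
    obtain ⟨k, hk⟩ := hcon i j hij
    have h1 := abs_le.1 (hbox i k)
    have h2 := abs_le.1 (hbox j k)
    rcases lt_abs.1 hk with h | h
    · exact ⟨k, 1, Or.inl rfl, by nlinarith, by nlinarith, by nlinarith⟩
    · exact ⟨k, -1, Or.inr rfl, by nlinarith, by nlinarith, by nlinarith⟩
  -- engine: a bad pair in coordinate k, all entries weakly same-signed, contradicts sum bound
  have engine : ∀ (k : Fin 2) (σ : ℝ) (i j : Fin t), (σ = 1 ∨ σ = -1) → i ≠ j →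
      1 < σ * (v i k + v j k) → (∀ l, 0 ≤ σ * v l k) → False := by
    intro k σ i j hσ hij h1 hnn
    have hσ1 : |σ| = 1 := by rcases hσ with h | h <;> simp [h]
    have hs : ∑ l, σ * v l k ≤ 1 := by
      calc ∑ l, σ * v l k = σ * ∑ l, v l k := by rw [Finset.mul_sum]
        _ ≤ |σ * ∑ l, v l k| := le_abs_self _
        _ = |σ| * |∑ l, v l k| := abs_mul _ _
        _ ≤ 1 := by rw [hσ1, one_mul]; exact hsum k
    have hp : σ * v i k + σ * v j k ≤ ∑ l, σ * v l k := by
      have := Finset.sum_le_sum_of_subset_of_nonneg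
        (Finset.subset_univ ({i, j} : Finset (Fin t))) (fun l _ _ => hnn l)
      rwa [Finset.sum_pair hij] at this
    nlinarith
  have sgn_eq : ∀ (σ τ x : ℝ), (σ = 1 ∨ σ = -1) → (τ = 1 ∨ τ = -1) →
      0 < σ * x → 0 < τ * x → σ = τ := by
    intro σ τ x hσ hτ h1 h2
    rcases hσ with rfl | rfl <;> rcases hτ with rfl | rfl <;> first | rfl | nlinarith
  have two_cases : ∀ x y z : Fin 2, y ≠ z → x = y ∨ x = z := by decide
  -- start with the pair (0,1)
  set A : Fin t := ⟨0, by omega⟩ with hA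
  set B : Fin t := ⟨1, by omega⟩ with hB
  have hAB : A ≠ B := by simp [hA, hB, Fin.ext_iff]
  obtain ⟨k, σ, hσ, ha, hb, hsum1⟩ := sign A B hAB
  by_cases H1 : ∀ l, 0 ≤ σ * v l k
  · exact engine k σ A B hσ hAB hsum1 H1
  push_neg at H1
  obtain ⟨l, hl⟩ := H1
  have hla : l ≠ A := by intro h; rw [h] at hl; linarith
  obtain ⟨k', τ, hτ, hl', ha', hsum2⟩ := sign l A hla
  have hkk : k' ≠ k := by
    intro h; rw [h] at hl' ha'
    have := sgn_eq τ σ (v A k) hτ hσ ha' ha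
    rw [this] at hl'; linarith
  by_cases H2 : ∀ m, 0 ≤ τ * v m k'
  · exact engine k' τ l A hτ hla hsum2 H2
  push_neg at H2
  obtain ⟨m, hm⟩ := H2
  have hml : m ≠ l := by intro h; rw [h] at hm; linarith
  obtain ⟨k'', ρ, hρ, h1, h2, _⟩ := sign l m hml.symm
  have hk2 : k'' = k := by
    rcases two_cases k'' k' k hkk with h | h
    · exfalso; rw [h] at h1 h2
      have := sgn_eq ρ τ (v l k') hρ hτ h1 hl'
      rw [this] at h2; linarith
    · exact h
  rw [hk2] at h1 h2
  -- ρ = -σ, so σ * v m k < 0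
  have hnegσ : (-σ = 1 ∨ -σ = -1) := by rcases hσ with h | h <;> simp [h]
  have hρσ : ρ = -σ := by
    have hls : 0 < -σ * v l k := by rw [neg_mul]; linarith
    exact sgn_eq ρ (-σ) (v l k) hρ hnegσ h1 hls
  have hσm : σ * v m k < 0 := by rw [hρσ, neg_mul] at h2; linarith
  have hma : m ≠ A := by intro h; rw [h] at hσm; linarith
  obtain ⟨k''', ρ', hρ', g1, g2, _⟩ := sign A m hma.symm
  rcases two_cases k''' k k' hkk.symm with h | h
  · rw [h] at g1 g2
    have := sgn_eq ρ' σ (v A k) hρ' hσ g1 ha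
    rw [this] at g2; linarith
  · rw [h] at g1 g2
    have := sgn_eq ρ' τ (v A k') hρ' hτ g1 ha'
    rw [this] at g2; linarith
end

section
/- (Steinitz lemma, Grinberg–Sevastyanov version.) Let d ≥ 1, let ‖·‖ be any norm on ℝ^d, and let v_1, …, v_n be vectors in ℝ^d with ‖v_i‖ ≤ 1 for all i and v_1 + ⋯ + v_n = 0. Then there exists a permutation π of {1,…,n} such that for every k = 1, 2, …, n, the partial sum v_{π(1)} + v_{π(2)} + ⋯ + v_{π(k)} has norm at most d. -/
open Finset

namespace SteinitzAux

/-- The invariant for the Grinberg–Sevastyanov construction: coefficients in `[0,1]`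
supported on `A`, summing to `c`, with vanishing weighted vector sum. -/
def Good {d n : ℕ} (v : Fin n → Fin d → ℝ) (A : Finset (Fin n)) (c : ℝ) (l : Fin n → ℝ) : Prop :=
  (∀ i ∈ A, 0 ≤ l i ∧ l i ≤ 1) ∧ (∑ i ∈ A, l i = c) ∧ (∑ i ∈ A, l i • v i = 0)

/-- Among `Good` coefficient vectors there is one with at most `d+1` fractional coordinates. -/
lemma reduce {d n : ℕ} (v : Fin n → Fin d → ℝ) (A : Finset (Fin n)) (c : ℝ)
    (h : ∃ l, Good v A c l) :
    ∃ l, Good v A c l ∧ (A.filter fun i => l i ≠ 0 ∧ l i ≠ 1).card ≤ d + 1 := by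
  classical
  have hP : ∃ m, ∃ l, Good v A c l ∧ (A.filter fun i => l i ≠ 0 ∧ l i ≠ 1).card = m := by
    obtain ⟨l, hl⟩ := h
    exact ⟨_, l, hl, rfl⟩
  obtain ⟨l, hl, hcard⟩ := Nat.find_spec hP
  by_cases hm : Nat.find hP ≤ d + 1
  · exact ⟨l, hl, hcard ▸ hm⟩
  exfalso
  push_neg at hm
  set Fr := A.filter fun i => l i ≠ 0 ∧ l i ≠ 1 with hFr
  have hFrA : Fr ⊆ A := filter_subset _ _
  have hfrac : ∀ i ∈ Fr, 0 < l i ∧ l i < 1 := by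
    intro i hi
    rw [hFr, mem_filter] at hi
    obtain ⟨hiA, h0, h1⟩ := hi
    obtain ⟨ha, hb⟩ := hl.1 i hiA
    exact ⟨lt_of_le_of_ne ha (Ne.symm h0), lt_of_le_of_ne hb h1⟩
  have hcard2 : d + 1 < Fr.card := hcard ▸ hm
  have hnli : ¬ LinearIndependent ℝ (fun i : ↥Fr => ((v i, 1) : (Fin d → ℝ) × ℝ)) := by
    intro hli
    have h1 := hli.fintype_card_le_finrank
    rw [Fintype.card_coe] at h1
    have hfr : Module.finrank ℝ ((Fin d → ℝ) × ℝ) = d + 1 := by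
      rw [Module.finrank_prod, Module.finrank_pi, Module.finrank_self, Fintype.card_fin]
    omega
  obtain ⟨g, hg0, j, hgj⟩ := Fintype.not_linearIndependent_iff.mp hnli
  set μ : Fin n → ℝ := fun i => if h : i ∈ Fr then g ⟨i, h⟩ else 0 with hμ
  have hμFr : ∀ i : ↥Fr, μ i = g i := fun i => dif_pos i.2
  have hμ0 : ∀ i, i ∉ Fr → μ i = 0 := fun i hi => dif_neg hi
  have hsum1 : ∑ i ∈ Fr, μ i • ((v i, 1) : (Fin d → ℝ) × ℝ) = 0 := by
    rw [← Finset.sum_coe_sort Fr (fun i => μ i • ((v i, 1) : (Fin d → ℝ) × ℝ))]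
    rw [← hg0]
    exact Finset.sum_congr rfl fun i _ => by rw [hμFr]
  have hsv : ∑ i ∈ Fr, μ i • v i = 0 := by
    have := congrArg Prod.fst hsum1
    simpa [Prod.fst_sum] using this
  have hsμ : ∑ i ∈ Fr, μ i = 0 := by
    have := congrArg Prod.snd hsum1
    simpa [Prod.snd_sum] using this
  have hsμA : ∑ i ∈ A, μ i = 0 := by
    rw [← Finset.sum_subset hFrA (fun i _ hi => hμ0 i hi)]
    exact hsμ
  have hsvA : ∑ i ∈ A, μ i • v i = 0 := by
    rw [← Finset.sum_subset hFrA (fun i _ hi => by rw [hμ0 i hi, zero_smul])]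
    exact hsv
  have hpos : ∃ i ∈ Fr, 0 < μ i := by
    by_contra hno
    push_neg at hno
    have hall := (Finset.sum_eq_zero_iff_of_nonpos hno).mp hsμ
    have hj2 := hall j j.2
    rw [hμFr] at hj2
    exact hgj hj2
  obtain ⟨i₀, hi₀Fr, hi₀pos⟩ := hpos
  set T := Fr.filter fun i => μ i ≠ 0 with hT
  have hTne : T.Nonempty := ⟨i₀, mem_filter.mpr ⟨hi₀Fr, ne_of_gt hi₀pos⟩⟩
  have hTFr : T ⊆ Fr := filter_subset _ _
  set step : Fin n → ℝ := fun i => if 0 < μ i then (1 - l i) / μ i else l i / (-μ i) with hstepdef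
  have hstep_pos : ∀ i ∈ T, 0 < step i := by
    intro i hi
    rw [hT, mem_filter] at hi
    obtain ⟨h1, h2⟩ := hfrac i hi.1
    show 0 < if 0 < μ i then (1 - l i) / μ i else l i / -μ i
    by_cases hμi : 0 < μ i
    · rw [if_pos hμi]; exact div_pos (by linarith) hμi
    · rw [if_neg hμi]
      have hlt : μ i < 0 := lt_of_le_of_ne (not_lt.mp hμi) hi.2
      exact div_pos h1 (by linarith)
  set t := T.inf' hTne step with htdef
  have ht0 : 0 < t := (Finset.lt_inf'_iff hTne).mpr hstep_pos
  set l' : Fin n → ℝ := fun i => l i + t * μ i with hl'def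
  have hμT : ∀ i, i ∉ T → μ i = 0 := by
    intro i hi
    by_cases hiFr : i ∈ Fr
    · by_contra hne; exact hi (mem_filter.mpr ⟨hiFr, hne⟩)
    · exact hμ0 i hiFr
  have hl'eq : ∀ i, i ∉ T → l' i = l i := by
    intro i hi
    rw [hl'def]
    simp [hμT i hi]
  have hbT : ∀ i ∈ T, 0 ≤ l' i ∧ l' i ≤ 1 := by
    intro i hi
    have hts : t ≤ step i := Finset.inf'_le _ hi
    obtain ⟨hf1, hf2⟩ := hfrac i (hTFr hi)
    have hμne : μ i ≠ 0 := (mem_filter.mp hi).2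
    show 0 ≤ l i + t * μ i ∧ l i + t * μ i ≤ 1
    by_cases hμi : 0 < μ i
    · have hmp : 0 < t * μ i := mul_pos ht0 hμi
      have hub : t * μ i ≤ step i * μ i := mul_le_mul_of_nonneg_right hts (le_of_lt hμi)
      have hsm : step i * μ i = 1 - l i := by
        show (if 0 < μ i then (1 - l i) / μ i else l i / -μ i) * μ i = 1 - l i
        rw [if_pos hμi, div_mul_cancel₀ _ (ne_of_gt hμi)]
      constructor
      · linarith
      · rw [hsm] at hub; linarith
    · have hneg : μ i < 0 := lt_of_le_of_ne (not_lt.mp hμi) hμne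
      have hmp : t * μ i < 0 := mul_neg_of_pos_of_neg ht0 hneg
      have hub : step i * μ i ≤ t * μ i := mul_le_mul_of_nonpos_right hts (le_of_lt hneg)
      have hsm : step i * μ i = - l i := by
        show (if 0 < μ i then (1 - l i) / μ i else l i / -μ i) * μ i = - l i
        rw [if_neg hμi, div_mul_eq_mul_div, div_neg, mul_div_cancel_right₀ _ hμne]
      constructor
      · rw [hsm] at hub; linarith
      · linarith
  have hb : ∀ i ∈ A, 0 ≤ l' i ∧ l' i ≤ 1 := by
    intro i hiA
    by_cases hiT : i ∈ T
    · exact hbT i hiT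
    · rw [hl'eq i hiT]; exact hl.1 i hiA
  have hsum' : ∑ i ∈ A, l' i = c := by
    show ∑ i ∈ A, (l i + t * μ i) = c
    rw [Finset.sum_add_distrib, hl.2.1, ← Finset.mul_sum, hsμA, mul_zero, add_zero]
  have hsumv' : ∑ i ∈ A, l' i • v i = 0 := by
    show ∑ i ∈ A, (l i + t * μ i) • v i = 0
    have : ∀ i, (l i + t * μ i) • v i = l i • v i + t • (μ i • v i) := by
      intro i
      rw [add_smul, mul_smul]
    simp only [this]
    rw [Finset.sum_add_distrib, hl.2.2, ← Finset.smul_sum, hsvA, smul_zero, add_zero]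
  obtain ⟨istar, histar, hstarmin⟩ := Finset.exists_mem_eq_inf' hTne step
  have hμsne : μ istar ≠ 0 := (mem_filter.mp histar).2
  have hstar01 : l' istar = 1 ∨ l' istar = 0 := by
    have htt : t = step istar := hstarmin
    show l istar + t * μ istar = 1 ∨ l istar + t * μ istar = 0
    rw [htt]
    by_cases hμi : 0 < μ istar
    · left
      show l istar + (if 0 < μ istar then (1 - l istar) / μ istar
        else l istar / -μ istar) * μ istar = 1
      rw [if_pos hμi, div_mul_cancel₀ _ (ne_of_gt hμi)]
      ring
    · right
      show l istar + (if 0 < μ istar then (1 - l istar) / μ istar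
        else l istar / -μ istar) * μ istar = 0
      rw [if_neg hμi, div_mul_eq_mul_div, div_neg, mul_div_cancel_right₀ _ hμsne]
      ring
  have hsubset : (A.filter fun i => l' i ≠ 0 ∧ l' i ≠ 1) ⊆ Fr := by
    intro i hi
    rw [mem_filter] at hi
    by_contra hiFr
    have hiT : i ∉ T := fun h => hiFr (hTFr h)
    rw [hl'eq i hiT] at hi
    rw [hFr] at hiFr
    rw [mem_filter] at hiFr
    exact hiFr ⟨hi.1, hi.2⟩
  have histar' : istar ∉ (A.filter fun i => l' i ≠ 0 ∧ l' i ≠ 1) := by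
    intro hmem
    obtain ⟨_, h0, h1⟩ := mem_filter.mp hmem
    rcases hstar01 with h | h
    · exact h1 h
    · exact h0 h
  have hss : (A.filter fun i => l' i ≠ 0 ∧ l' i ≠ 1) ⊂ Fr :=
    (Finset.ssubset_iff_of_subset hsubset).mpr ⟨istar, hTFr histar, histar'⟩
  have hlt : (A.filter fun i => l' i ≠ 0 ∧ l' i ≠ 1).card < Nat.find hP := by
    calc (A.filter fun i => l' i ≠ 0 ∧ l' i ≠ 1).card < Fr.card := Finset.card_lt_card hss
      _ = Nat.find hP := hcard
  exact Nat.find_min hP hlt ⟨l', ⟨hb, hsum', hsumv'⟩, rfl⟩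

/-- If the total weight is `|A| - 1 - d` and there are few fractional coordinates,
some coordinate in `A` is zero. -/
lemma exists_zero {d n : ℕ} (hd : 1 ≤ d) (v : Fin n → Fin d → ℝ) (A : Finset (Fin n))
    (l : Fin n → ℝ) (hl : Good v A ((A.card : ℝ) - 1 - d) l)
    (hfrac : (A.filter fun i => l i ≠ 0 ∧ l i ≠ 1).card ≤ d + 1) :
    ∃ i ∈ A, l i = 0 := by
  classical
  by_contra hno
  push_neg at hno
  set O := A.filter fun i => l i = 1 with hO
  set Fr2 := A.filter fun i => ¬ (l i = 1) with hF
  have hsplit : ∑ i ∈ O, l i + ∑ i ∈ Fr2, l i = (A.card : ℝ) - 1 - d := by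
    rw [hO, hF, Finset.sum_filter_add_sum_filter_not]
    exact hl.2.1
  have hOsum : ∑ i ∈ O, l i = O.card := by
    rw [Finset.sum_congr rfl (fun i hi => (mem_filter.mp hi).2), Finset.sum_const,
      nsmul_eq_mul, mul_one]
  have hcards : O.card + Fr2.card = A.card := Finset.card_filter_add_card_filter_not _
  have hFr2sub : Fr2 ⊆ A.filter fun i => l i ≠ 0 ∧ l i ≠ 1 := by
    intro i hi
    rw [hF, mem_filter] at hi
    exact mem_filter.mpr ⟨hi.1, hno i hi.1, hi.2⟩
  have hFr2card : Fr2.card ≤ d + 1 := le_trans (Finset.card_le_card hFr2sub) hfrac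
  have hd' : (1 : ℝ) ≤ d := by exact_mod_cast hd
  by_cases hFr2ne : Fr2.Nonempty
  · have hFpos : 0 < ∑ i ∈ Fr2, l i := by
      apply Finset.sum_pos _ hFr2ne
      intro i hi
      have hiA : i ∈ A := (filter_subset _ _) hi
      exact lt_of_le_of_ne (hl.1 i hiA).1 (Ne.symm (hno i hiA))
    have hc1 : (O.card : ℝ) + (Fr2.card : ℝ) = (A.card : ℝ) := by exact_mod_cast hcards
    have hc2 : (Fr2.card : ℝ) ≤ (d : ℝ) + 1 := by exact_mod_cast hFr2card
    linarith [hsplit, hOsum]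
  · rw [not_nonempty_iff_eq_empty] at hFr2ne
    rw [hFr2ne, Finset.sum_empty] at hsplit
    have hc0 : Fr2.card = 0 := by rw [hFr2ne]; rfl
    have hc1 : O.card = A.card := by omega
    rw [hOsum, hc1] at hsplit
    linarith

/-- Induction step: shrink a good set by one element. -/
lemma step_lemma {d n : ℕ} (hd : 1 ≤ d) (v : Fin n → Fin d → ℝ) (A : Finset (Fin n)) (k : ℕ)
    (hdk : d ≤ k) (hA : A.card = k + 1)
    (h : ∃ l, Good v A ((k : ℝ) + 1 - d) l) :
    ∃ i ∈ A, ∃ l, Good v (A.erase i) ((k : ℝ) - d) l := by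
  obtain ⟨l, hl⟩ := h
  have hdk' : (d : ℝ) ≤ k := Nat.cast_le.mpr hdk
  have hden : (1 : ℝ) ≤ (k : ℝ) + 1 - d := by linarith
  have hdenne : ((k : ℝ) + 1 - d) ≠ 0 := by linarith
  set r : ℝ := ((k : ℝ) - d) / ((k : ℝ) + 1 - d) with hr
  have hr0 : 0 ≤ r := div_nonneg (by linarith) (by linarith)
  have hr1 : r ≤ 1 := by rw [hr, div_le_one (by linarith)]; linarith
  have h0 : Good v A ((k : ℝ) - d) (fun i => r * l i) := by
    refine ⟨?_, ?_, ?_⟩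
    · intro i hi
      obtain ⟨h1, h2⟩ := hl.1 i hi
      refine ⟨mul_nonneg hr0 h1, ?_⟩
      calc r * l i ≤ 1 * 1 := mul_le_mul hr1 h2 h1 zero_le_one
        _ = 1 := one_mul 1
    · show ∑ i ∈ A, r * l i = (k : ℝ) - d
      rw [← Finset.mul_sum, hl.2.1, hr, div_mul_cancel₀ _ hdenne]
    · show ∑ i ∈ A, (r * l i) • v i = 0
      have hms : ∀ i, (r * l i) • v i = r • (l i • v i) := fun i => mul_smul r (l i) (v i)
      simp only [hms]
      rw [← Finset.smul_sum, hl.2.2, smul_zero]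
  obtain ⟨l₁, hl₁, hfrac⟩ := reduce v A ((k : ℝ) - d) ⟨_, h0⟩
  have hl₁' : Good v A ((A.card : ℝ) - 1 - d) l₁ := by
    have hc : ((A.card : ℝ) - 1 - d) = (k : ℝ) - d := by rw [hA]; push_cast; ring
    rwa [hc]
  obtain ⟨i, hiA, hi0⟩ := exists_zero hd v A l₁ hl₁' hfrac
  refine ⟨i, hiA, l₁, ?_, ?_, ?_⟩
  · intro j hj
    exact hl₁.1 j (mem_of_mem_erase hj)
  · rw [Finset.sum_erase _ hi0]
    exact hl₁.2.1
  · rw [Finset.sum_erase (f := fun j => l₁ j • v j) A (by show l₁ i • v i = 0; rw [hi0, zero_smul])]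
    exact hl₁.2.2

/-- The full chain of nested good sets. -/
lemma chain {d n : ℕ} (hd : 1 ≤ d) (hdn : d ≤ n) (v : Fin n → Fin d → ℝ)
    (hsum : ∑ i, v i = 0) :
    ∃ B : ℕ → Finset (Fin n),
      (∀ m, m ≤ n → (B m).card = m) ∧
      (∀ m, m < n → B m ⊆ B (m + 1)) ∧
      (∀ m, d ≤ m → m ≤ n → ∃ l, Good v (B m) ((m : ℝ) - d) l) := by
  classical
  set P : ℕ → Prop := fun k => ∃ B : ℕ → Finset (Fin n),
      (∀ m, k ≤ m → m ≤ n → (B m).card = m) ∧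
      (∀ m, k ≤ m → m < n → B m ⊆ B (m + 1)) ∧
      (∀ m, k ≤ m → d ≤ m → m ≤ n → ∃ l, Good v (B m) ((m : ℝ) - d) l) with hPdef
  have hPn : P n := by
    refine ⟨fun _ => Finset.univ, ?_, ?_, ?_⟩
    · intro m hm hm'
      have hmn : m = n := le_antisymm hm' hm
      rw [hmn, Finset.card_univ, Fintype.card_fin]
    · intro m hm hm'
      exact absurd (lt_of_le_of_lt hm hm') (lt_irrefl n)
    · intro m hm hdm hm'
      have hmn : m = n := le_antisymm hm' hm
      subst hmn
      have hn0 : 0 < m := lt_of_lt_of_le hd hdn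
      have h2 : (0 : ℝ) < m := by exact_mod_cast hn0
      have h1 : (d : ℝ) ≤ m := Nat.cast_le.mpr hdn
      refine ⟨fun _ => ((m : ℝ) - d) / m, ?_, ?_, ?_⟩
      · intro i _
        constructor
        · exact div_nonneg (by linarith) (le_of_lt h2)
        · rw [div_le_one h2]
          have : (0 : ℝ) ≤ d := Nat.cast_nonneg d
          linarith
      · rw [Finset.sum_const, Finset.card_univ, Fintype.card_fin, nsmul_eq_mul]
        field_simp
      · rw [← Finset.smul_sum, hsum, smul_zero]
  have hstep : ∀ k, k + 1 ≤ n → P (k + 1) → P k := by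
    intro k hk1 hPk
    obtain ⟨B, hBcard, hBsub, hBgood⟩ := hPk
    have hBk1 : (B (k + 1)).card = k + 1 := hBcard _ le_rfl hk1
    have hex : ∃ i ∈ B (k + 1), (d ≤ k → ∃ l, Good v ((B (k + 1)).erase i) ((k : ℝ) - d) l) := by
      by_cases hdk : d ≤ k
      · have hg := hBgood (k + 1) le_rfl (by omega) hk1
        have hg' : ∃ l, Good v (B (k + 1)) ((k : ℝ) + 1 - d) l := by
          obtain ⟨l, hl⟩ := hg
          refine ⟨l, ?_⟩
          have hcast : (((k + 1 : ℕ)) : ℝ) - d = (k : ℝ) + 1 - d := by push_cast; ring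
          rwa [hcast] at hl
        obtain ⟨i, hi, l, hl⟩ := step_lemma hd v (B (k + 1)) k hdk hBk1 hg'
        exact ⟨i, hi, fun _ => ⟨l, hl⟩⟩
      · have hne : (B (k + 1)).Nonempty := Finset.card_pos.mp (by omega)
        exact ⟨hne.choose, hne.choose_spec, fun hdk' => absurd hdk' hdk⟩
    obtain ⟨i, hiB, hgood'⟩ := hex
    refine ⟨fun m => if m ≤ k then (B (k + 1)).erase i else B m, ?_, ?_, ?_⟩
    · intro m hm hmn
      show (if m ≤ k then (B (k + 1)).erase i else B m).card = m
      by_cases hmk : m ≤ k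
      · rw [if_pos hmk, Finset.card_erase_of_mem hiB, hBk1]
        omega
      · rw [if_neg hmk]
        exact hBcard m (by omega) hmn
    · intro m hm hmn
      show (if m ≤ k then (B (k + 1)).erase i else B m)
          ⊆ (if m + 1 ≤ k then (B (k + 1)).erase i else B (m + 1))
      by_cases hmk : m ≤ k
      · rw [if_pos hmk, if_neg (show ¬ m + 1 ≤ k by omega)]
        rw [show m + 1 = k + 1 from by omega]
        exact Finset.erase_subset _ _
      · rw [if_neg hmk, if_neg (show ¬ m + 1 ≤ k by omega)]
        exact hBsub m (by omega) hmn
    · intro m hm hdm hmn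
      show ∃ l, Good v (if m ≤ k then (B (k + 1)).erase i else B m) ((m : ℝ) - d) l
      by_cases hmk : m ≤ k
      · rw [if_pos hmk, show m = k from by omega]
        exact hgood' (by omega)
      · rw [if_neg hmk]
        exact hBgood m (by omega) hdm hmn
  have main : ∀ j, j ≤ n → P (n - j) := by
    intro j
    induction j with
    | zero => intro _; exact hPn
    | succ j ih =>
      intro hj
      have h1 : n - (j + 1) + 1 = n - j := by omega
      have h2 : n - (j + 1) + 1 ≤ n := by omega
      exact hstep _ h2 (h1 ▸ ih (by omega))
  have h0 := main n le_rfl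
  rw [Nat.sub_self] at h0
  obtain ⟨B, h1, h2, h3⟩ := h0
  exact ⟨B, fun m hm => h1 m (Nat.zero_le _) hm, fun m hm => h2 m (Nat.zero_le _) hm,
    fun m hdm hm => h3 m (Nat.zero_le _) hdm hm⟩

lemma f_zero {d : ℕ} (f : (Fin d → ℝ) → ℝ)
    (f_smul : ∀ (a : ℝ) (x), f (a • x) = |a| * f x) : f 0 = 0 := by
  have := f_smul 0 0
  simpa using this

lemma f_sum_le {d : ℕ} (f : (Fin d → ℝ) → ℝ)
    (f_add : ∀ x y, f (x + y) ≤ f x + f y)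
    (f_smul : ∀ (a : ℝ) (x), f (a • x) = |a| * f x)
    {ι : Type*} (s : Finset ι) (g : ι → Fin d → ℝ) :
    f (∑ i ∈ s, g i) ≤ ∑ i ∈ s, f (g i) := by
  induction s using Finset.cons_induction with
  | empty => simp [f_zero f f_smul]
  | cons a s ha ih =>
    rw [Finset.sum_cons, Finset.sum_cons]
    exact le_trans (f_add _ _) (by linarith)

end SteinitzAux

/-- Steinitz lemma (Grinberg–Sevastyanov version): if `f` is a norm on `ℝ^d` and
`v_1, …, v_n` are vectors of norm at most 1 summing to 0, then they can be permuted so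
that all partial sums have norm at most `d`. -/
theorem stmt_5 (d n : ℕ) (hd : 1 ≤ d) (f : (Fin d → ℝ) → ℝ)
    (f_add : ∀ x y, f (x + y) ≤ f x + f y)
    (f_smul : ∀ (a : ℝ) (x), f (a • x) = |a| * f x)
    (f_eq_zero : ∀ x, f x = 0 → x = 0)
    (v : Fin n → Fin d → ℝ)
    (hv : ∀ i, f (v i) ≤ 1)
    (hsum : ∑ i, v i = 0) :
    ∃ π : Equiv.Perm (Fin n),
      ∀ k : ℕ, 1 ≤ k → k ≤ n →
        f (∑ i ∈ Finset.univ.filter (fun i : Fin n => (i : ℕ) < k), v (π i)) ≤ d := by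
  classical
  have fsum := fun (s : Finset (Fin n)) (g : Fin n → Fin d → ℝ) =>
    SteinitzAux.f_sum_le f f_add f_smul s g
  have hcardle : ∀ k : ℕ, (Finset.univ.filter fun i : Fin n => (i : ℕ) < k).card ≤ k := by
    intro k
    calc (Finset.univ.filter fun i : Fin n => (i : ℕ) < k).card
        ≤ (Finset.range k).card := by
          refine Finset.card_le_card_of_injOn (fun i => (i : ℕ)) ?_ ?_
          · intro i hi
            rw [Finset.mem_coe, Finset.mem_range]
            exact (Finset.mem_filter.mp hi).2
          · intro a _ b _ hab
            exact Fin.ext hab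
      _ = k := Finset.card_range k
  have hsmall : ∀ (w : Fin n → Fin n) (k : ℕ),
      f (∑ i ∈ Finset.univ.filter (fun i : Fin n => (i : ℕ) < k), v (w i))
        ≤ ((Finset.univ.filter (fun i : Fin n => (i : ℕ) < k)).card : ℝ) := by
    intro w k
    refine le_trans (fsum _ _) ?_
    calc ∑ i ∈ Finset.univ.filter (fun i : Fin n => (i : ℕ) < k), f (v (w i))
        ≤ ∑ _i ∈ Finset.univ.filter (fun i : Fin n => (i : ℕ) < k), (1 : ℝ) :=
          Finset.sum_le_sum (fun i _ => hv (w i))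
      _ = _ := by rw [Finset.sum_const, nsmul_eq_mul, mul_one]
  by_cases hdn : d ≤ n
  · -- main case
    obtain ⟨B, hBcard, hBsub, hBgood⟩ := SteinitzAux.chain hd hdn v hsum
    have hmono : ∀ b, b ≤ n → ∀ a, a ≤ b → B a ⊆ B b := by
      intro b
      induction b with
      | zero =>
        intro _ a ha
        rw [Nat.le_zero.mp ha]
      | succ b ih =>
        intro hbn a ha
        rcases Nat.eq_or_lt_of_le ha with h | h
        · rw [h]
        · exact (ih (by omega) a (by omega)).trans (hBsub b (by omega))
    have hexg : ∀ i : Fin n, ∃ a, a ∈ B (i.val + 1) ∧ a ∉ B i.val := by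
      intro i
      have h1 : (B (i.val + 1)).card = i.val + 1 := hBcard _ (Nat.succ_le_of_lt i.isLt)
      have h2 : (B i.val).card = i.val := hBcard _ (le_of_lt i.isLt)
      by_contra h
      push_neg at h
      have hsub : B (i.val + 1) ⊆ B i.val := fun a ha => h a ha
      have := Finset.card_le_card hsub
      omega
    set g : Fin n → Fin n := fun i => (hexg i).choose with hgdef
    have hg1 : ∀ i : Fin n, g i ∈ B (i.val + 1) := fun i => (hexg i).choose_spec.1
    have hg2 : ∀ i : Fin n, g i ∉ B i.val := fun i => (hexg i).choose_spec.2
    have hginj : Function.Injective g := by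
      intro i j hij
      by_contra hne
      rcases lt_trichotomy (i : ℕ) (j : ℕ) with h | h | h
      · have hmem : g i ∈ B (j : ℕ) :=
          hmono (j : ℕ) (le_of_lt j.isLt) ((i : ℕ) + 1) (by omega) (hg1 i)
        rw [hij] at hmem
        exact hg2 j hmem
      · exact hne (Fin.ext h)
      · have hmem : g j ∈ B (i : ℕ) :=
          hmono (i : ℕ) (le_of_lt i.isLt) ((j : ℕ) + 1) (by omega) (hg1 j)
        rw [← hij] at hmem
        exact hg2 i hmem
    refine ⟨Equiv.ofBijective g (Finite.injective_iff_bijective.mp hginj), ?_⟩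
    have himg : ∀ k, k ≤ n → (Finset.univ.filter fun i : Fin n => (i : ℕ) < k).image g = B k := by
      intro k
      induction k with
      | zero =>
        intro _
        have hB0 : B 0 = ∅ := Finset.card_eq_zero.mp (hBcard 0 (Nat.zero_le _))
        have hfil : (Finset.univ.filter fun i : Fin n => (i : ℕ) < 0) = ∅ := by
          ext i; simp
        rw [hfil, Finset.image_empty, hB0]
      | succ k ih =>
        intro hk
        have hik := ih (by omega)
        have hkn : k < n := by omega
        have hfil : (Finset.univ.filter fun i : Fin n => (i : ℕ) < k + 1)
            = insert (⟨k, hkn⟩ : Fin n) (Finset.univ.filter fun i : Fin n => (i : ℕ) < k) := by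
          ext i
          simp only [Finset.mem_filter, Finset.mem_insert, Finset.mem_univ, true_and, Fin.ext_iff]
          omega
        rw [hfil, Finset.image_insert, hik]
        apply Finset.eq_of_subset_of_card_le
        · intro a ha
          rcases Finset.mem_insert.mp ha with h | h
          · rw [h]; exact hg1 ⟨k, hkn⟩
          · exact hBsub k hkn h
        · rw [Finset.card_insert_of_notMem (hg2 ⟨k, hkn⟩), hBcard k (by omega),
            hBcard (k + 1) hk]
    intro k hk1 hkn
    have hs : ∑ i ∈ Finset.univ.filter (fun i : Fin n => (i : ℕ) < k),
        v ((Equiv.ofBijective g (Finite.injective_iff_bijective.mp hginj)) i)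
        = ∑ j ∈ B k, v j := by
      rw [← himg k hkn, Finset.sum_image (fun a _ b _ h => hginj h)]
      rfl
    rw [hs]
    rcases le_or_gt k d with hkd | hdk
    · -- small k
      have hc1 : (B k).card = k := hBcard k hkn
      refine le_trans (fsum _ _) ?_
      calc ∑ j ∈ B k, f (v j) ≤ ∑ _j ∈ B k, (1 : ℝ) := Finset.sum_le_sum (fun j _ => hv j)
        _ = ((B k).card : ℝ) := by rw [Finset.sum_const, nsmul_eq_mul, mul_one]
        _ ≤ (d : ℝ) := by rw [hc1]; exact_mod_cast hkd
    · -- large k: use Good witness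
      obtain ⟨l, hl⟩ := hBgood k (le_of_lt hdk) hkn
      have hBk : (B k).card = k := hBcard k hkn
      have key : ∑ j ∈ B k, v j = ∑ j ∈ B k, (1 - l j) • v j := by
        rw [eq_comm]
        calc ∑ j ∈ B k, (1 - l j) • v j = ∑ j ∈ B k, (v j - l j • v j) := by
              apply Finset.sum_congr rfl
              intro j _
              rw [sub_smul, one_smul]
          _ = ∑ j ∈ B k, v j - ∑ j ∈ B k, l j • v j := Finset.sum_sub_distrib _ _
          _ = ∑ j ∈ B k, v j := by rw [hl.2.2, sub_zero]
      rw [key]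
      refine le_trans (fsum _ _) ?_
      have hterm : ∀ j ∈ B k, f ((1 - l j) • v j) ≤ 1 - l j := by
        intro j hj
        rw [f_smul]
        obtain ⟨h1, h2⟩ := hl.1 j hj
        rw [abs_of_nonneg (by linarith)]
        calc (1 - l j) * f (v j) ≤ (1 - l j) * 1 :=
              mul_le_mul_of_nonneg_left (hv j) (by linarith)
          _ = 1 - l j := mul_one _
      calc ∑ j ∈ B k, f ((1 - l j) • v j) ≤ ∑ j ∈ B k, (1 - l j) := Finset.sum_le_sum hterm
        _ = ((B k).card : ℝ) - ∑ j ∈ B k, l j := by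
            rw [Finset.sum_sub_distrib, Finset.sum_const, nsmul_eq_mul, mul_one]
        _ = (d : ℝ) := by rw [hl.2.1, hBk]; ring
  · -- n < d : any permutation works
    refine ⟨Equiv.refl _, ?_⟩
    intro k hk1 hkn
    refine le_trans (hsmall _ k) ?_
    have h1 : (Finset.univ.filter fun i : Fin n => (i : ℕ) < k).card ≤ d :=
      le_trans (hcardle k) (le_trans hkn (le_of_not_ge hdn))
    exact_mod_cast h1
end

section
/- Let d ≥ 1 and t ≥ 2, and let w_1, …, w_t be vectors with all coordinates in {-1, +1} ⊆ ℝ^d such that w_1 + ⋯ + w_t = 0 and such that ∑_{i∈S} w_i ≠ 0 for every subset S ⊆ {1,…,t} with 2 ≤ |S| < t. Then there exists a sequence v_1, …, v_t of vectors in [-1,1]^{2d} with v_1 + ⋯ + v_t ∈ [-1,1]^{2d} such that for every subset S ⊆ {1,…,t} with 2 ≤ |S| < t, the sum ∑_{i∈S} v_i lies outside [-1,1]^{2d}. (Dimension-doubling: a minimal-with-respect-to-zero-sums ±1 sequence in dimension d yields a minimal sequence of the same length in the box in dimension 2d, so τ(2d) ≥ t.) -/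
/-- Dimension-doubling: if `w_1, …, w_t` are ±1 vectors in `ℝ^d` with sum `0` such that no
proper subset of size at least 2 has sum `0`, then there are vectors `v_1, …, v_t` in the box
`[-1,1]^{2d}` with sum in the box such that every proper subset of size at least 2 has sum
outside the box. -/
theorem stmt_10 (d t : ℕ) (hd : 1 ≤ d) (ht : 2 ≤ t)
    (w : Fin t → Fin d → ℝ)
    (hw : ∀ i j, w i j = 1 ∨ w i j = -1)
    (hsum : ∑ i, w i = 0)
    (hmin : ∀ S : Finset (Fin t), 2 ≤ S.card → S.card < t → ∑ i ∈ S, w i ≠ 0) :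
    ∃ v : Fin t → Fin (2 * d) → ℝ,
      (∀ i j, |v i j| ≤ 1) ∧
      (∀ j, |∑ i, v i j| ≤ 1) ∧
      (∀ S : Finset (Fin t), 2 ≤ S.card → S.card < t →
        ¬ (∀ j, |∑ i ∈ S, v i j| ≤ 1)) := by
  classical
  have htR : (2:ℝ) ≤ t := by exact_mod_cast ht
  have ht0 : (0:ℝ) < t := by linarith
  set c : ℝ := 1 / t with hc
  have hc0 : 0 < c := by positivity
  have hc2 : c ≤ 1/2 := by
    rw [hc, div_le_div_iff₀ ht0 (by norm_num)]; linarith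
  have htc : (t:ℝ) * c = 1 := by rw [hc, mul_one_div, div_self ht0.ne']
  refine ⟨fun i j => (1 - c) * w i ⟨(j:ℕ) % d, Nat.mod_lt _ hd⟩ +
      (if (j:ℕ) < d then c else -c), ?_, ?_, ?_⟩
  · intro i j
    simp only
    rcases hw i ⟨(j:ℕ) % d, Nat.mod_lt _ hd⟩ with h | h <;>
      rw [h] <;> split <;> rw [abs_le] <;> constructor <;> linarith
  · intro j
    set m : Fin d := ⟨(j:ℕ) % d, Nat.mod_lt _ hd⟩
    have h0 : ∑ i, w i m = 0 := by
      have := congrFun hsum m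
      simpa [Finset.sum_apply] using this
    rw [Finset.sum_add_distrib, ← Finset.mul_sum, h0, Finset.sum_const,
      Finset.card_univ, Fintype.card_fin, nsmul_eq_mul]
    split <;> rw [abs_le] <;> constructor <;> nlinarith
  · intro S hS2 hSt hall
    have hne := hmin S hS2 hSt
    have : ∃ j : Fin d, ∑ i ∈ S, w i j ≠ 0 := by
      by_contra h
      push_neg at h
      exact hne (by funext j; simpa [Finset.sum_apply] using h j)
    obtain ⟨j, hj⟩ := this
    set W : ℝ := ∑ i ∈ S, w i j with hW
    -- W is a nonzero integer, so |W| ≥ 1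
    have hint : ((∑ i ∈ S, (if w i j = 1 then (1:ℤ) else -1) : ℤ) : ℝ) = W := by
      rw [hW]
      push_cast
      refine Finset.sum_congr rfl fun i _ => ?_
      rcases hw i j with h | h <;> norm_num [h]
    have hW1 : 1 ≤ |W| := by
      rw [← hint]
      rw [← hint] at hj
      have : (∑ i ∈ S, (if w i j = 1 then (1:ℤ) else -1) : ℤ) ≠ 0 := by
        exact_mod_cast hj
      have := Int.one_le_abs this
      exact_mod_cast this
    have hsR : (2:ℝ) ≤ S.card := by exact_mod_cast hS2
    -- helper to compute subset sums at a coordinate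
    have hsum1 : ∀ (k : Fin (2*d)), (k:ℕ) % d = (j:ℕ) →
        ∑ i ∈ S, ((1 - c) * w i ⟨(k:ℕ) % d, Nat.mod_lt _ hd⟩ +
          (if (k:ℕ) < d then c else -c))
        = (1 - c) * W + S.card * (if (k:ℕ) < d then c else -c) := by
      intro k hk
      have hm : (⟨(k:ℕ) % d, Nat.mod_lt _ hd⟩ : Fin d) = j := by
        apply Fin.ext; simp [hk]
      rw [hm, Finset.sum_add_distrib, ← Finset.mul_sum, Finset.sum_const,
        nsmul_eq_mul, hW]
    rcases le_or_gt 1 W with hpos | hneg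
    · -- use first-block coordinate j
      have hjd : (j:ℕ) < 2 * d := by omega
      have h := hall ⟨(j:ℕ), hjd⟩
      rw [hsum1 ⟨(j:ℕ), hjd⟩ (Nat.mod_eq_of_lt j.isLt)] at h
      have hlt : (j:ℕ) < d := j.isLt
      rw [if_pos hlt] at h
      rw [abs_le] at h
      nlinarith [h.2]
    · -- W ≤ -1
      have hWle : W ≤ -1 := by
        rcases abs_cases W with ⟨h1, _⟩ | ⟨h1, _⟩ <;> linarith [hW1]
      have hjd : d + (j:ℕ) < 2 * d := by omega
      have h := hall ⟨d + (j:ℕ), hjd⟩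
      have hmod : (d + (j:ℕ)) % d = (j:ℕ) := by
        rw [Nat.add_mod_left]; exact Nat.mod_eq_of_lt j.isLt
      rw [hsum1 ⟨d + (j:ℕ), hjd⟩ hmod] at h
      rw [if_neg (by simp only [Fin.val_mk]; omega)] at h
      rw [abs_le] at h
      nlinarith [h.1]
end
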